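/- arXiv:2604.04272 — 4 statements merged into one kernel-verified Lean document; each statement's English description precedes it below -/
import Mathlib

section
/- Let M be a nonempty compact metric space and f : M → ℝ^D a continuous map. For every open set U ⊆ M, the hit set H_U := { x ∈ ℝ^D : there exists m ∈ U with ‖x − f(m)‖ = min_{m' ∈ M} ‖x − f(m')‖ } is a countable union of closed subsets of ℝ^D; in particular, H_U is a Borel-measurable subset of ℝ^D. -/
open Metric Set

lemma iInf_norm_eq_infDist {D : ℕ} {M : Type*} [MetricSpace M] [Nonempty M]
    (f : M → EuclideanSpace ℝ (Fin D)) (x : EuclideanSpace ℝ (Fin D)) :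
    (⨅ m' : M, ‖x - f m'‖) = infDist x (Set.range f) := by
  rw [infDist_eq_iInf]
  simp only [dist_eq_norm]
  rw [iInf, iInf]
  congr 1
  rw [← Function.Surjective.range_comp (Set.rangeFactorization_surjective (f := f))
      (fun y : Set.range f => ‖x - (y : EuclideanSpace ℝ (Fin D))‖)]
  rfl

lemma hit_closed {D : ℕ} {M : Type*} [MetricSpace M] [CompactSpace M] [Nonempty M]
    (f : M → EuclideanSpace ℝ (Fin D)) (hf : Continuous f)
    (K : Set M) (hK : IsClosed K) :
    IsClosed {x : EuclideanSpace ℝ (Fin D) | ∃ m ∈ K, ‖x - f m‖ = ⨅ m' : M, ‖x - f m'‖} := by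
  rcases K.eq_empty_or_nonempty with rfl | hKne
  · simp
  have hKc : IsCompact (f '' K) := (hK.isCompact).image hf
  have hKne' : (f '' K).Nonempty := hKne.image f
  have hset : {x : EuclideanSpace ℝ (Fin D) | ∃ m ∈ K, ‖x - f m‖ = ⨅ m' : M, ‖x - f m'‖}
      = {x | infDist x (f '' K) ≤ infDist x (Set.range f)} := by
    ext x
    simp only [Set.mem_setOf_eq]
    constructor
    · rintro ⟨m, hm, hmin⟩
      calc infDist x (f '' K) ≤ dist x (f m) := infDist_le_dist_of_mem ⟨m, hm, rfl⟩
        _ = ‖x - f m‖ := dist_eq_norm _ _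
        _ = ⨅ m' : M, ‖x - f m'‖ := hmin
        _ = infDist x (Set.range f) := iInf_norm_eq_infDist f x
    · intro hle
      obtain ⟨y, ⟨m, hm, rfl⟩, hy⟩ := hKc.exists_infDist_eq_dist hKne' x
      refine ⟨m, hm, ?_⟩
      have h1 : infDist x (Set.range f) ≤ dist x (f m) :=
        infDist_le_dist_of_mem ⟨m, rfl⟩
      have : dist x (f m) = infDist x (Set.range f) := le_antisymm (by rw [← hy]; exact hle) h1
      rw [← dist_eq_norm, this, iInf_norm_eq_infDist]
  rw [hset]
  exact isClosed_le (continuous_infDist_pt _) (continuous_infDist_pt _)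

/-- **The hit set of an open set is an Fσ set (hence Borel).**
Let `M` be a nonempty compact metric space and `f : M → ℝ^D` continuous. For every open
`U ⊆ M`, the hit set `H_U = {x | ∃ m ∈ U, ‖x - f m‖ = min_{m'∈M} ‖x - f m'‖}` is a
countable union of closed subsets of `ℝ^D`; in particular it is Borel measurable. -/
theorem stmt_1 {D : ℕ} {M : Type*} [MetricSpace M] [CompactSpace M] [Nonempty M]
    (f : M → EuclideanSpace ℝ (Fin D)) (hf : Continuous f)
    (U : Set M) (hU : IsOpen U) :
    (∃ E : ℕ → Set (EuclideanSpace ℝ (Fin D)),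
        (∀ n, IsClosed (E n)) ∧
        {x : EuclideanSpace ℝ (Fin D) | ∃ m ∈ U, ‖x - f m‖ = ⨅ m' : M, ‖x - f m'‖}
          = ⋃ n, E n) ∧
      MeasurableSet
        {x : EuclideanSpace ℝ (Fin D) | ∃ m ∈ U, ‖x - f m‖ = ⨅ m' : M, ‖x - f m'‖} := by
  -- construct closed sets K n with ⋃ n, K n = U
  obtain ⟨K, hKcl, hKsub, hKcov⟩ :
      ∃ K : ℕ → Set M, (∀ n, IsClosed (K n)) ∧ (∀ n, K n ⊆ U) ∧ (∀ m ∈ U, ∃ n, m ∈ K n) := by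
    by_cases hUc : Uᶜ.Nonempty
    · refine ⟨fun n => {m | (1 : ℝ) / (n + 1) ≤ infDist m Uᶜ}, ?_, ?_, ?_⟩
      · intro n
        exact isClosed_le continuous_const (continuous_infDist_pt _)
      · intro n m hm
        by_contra hmU
        have h0 : infDist m Uᶜ = 0 := infDist_zero_of_mem (by simpa using hmU)
        have : (1 : ℝ) / (n + 1) ≤ 0 := h0 ▸ hm
        have hpos : (0 : ℝ) < 1 / (n + 1) := by positivity
        linarith
      · intro m hm
        have hpos : 0 < infDist m Uᶜ :=
          (hU.isClosed_compl.notMem_iff_infDist_pos hUc).1 (by simpa using hm)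
        obtain ⟨n, hn⟩ := exists_nat_one_div_lt hpos
        refine ⟨n, ?_⟩
        show (1 : ℝ) / (n + 1) ≤ infDist m Uᶜ
        have : (1 : ℝ) / (n + 1) < infDist m Uᶜ := by exact_mod_cast hn
        linarith
    · have : U = Set.univ := by
        rw [← Set.compl_empty_iff]
        exact Set.not_nonempty_iff_eq_empty.1 hUc
      subst this
      exact ⟨fun _ => Set.univ, fun _ => isClosed_univ, fun _ => le_rfl,
        fun m _ => ⟨0, Set.mem_univ m⟩⟩
  set E : ℕ → Set (EuclideanSpace ℝ (Fin D)) :=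
    fun n => {x | ∃ m ∈ K n, ‖x - f m‖ = ⨅ m' : M, ‖x - f m'‖} with hE
  have hEcl : ∀ n, IsClosed (E n) := fun n => hit_closed f hf (K n) (hKcl n)
  have heq : {x : EuclideanSpace ℝ (Fin D) | ∃ m ∈ U, ‖x - f m‖ = ⨅ m' : M, ‖x - f m'‖}
      = ⋃ n, E n := by
    ext x
    simp only [Set.mem_setOf_eq, Set.mem_iUnion, hE]
    constructor
    · rintro ⟨m, hm, hmin⟩
      obtain ⟨n, hn⟩ := hKcov m hm
      exact ⟨n, m, hn, hmin⟩
    · rintro ⟨n, m, hn, hmin⟩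
      exact ⟨m, hKsub n hn, hmin⟩
  refine ⟨⟨E, hEcl, heq⟩, ?_⟩
  rw [heq]
  exact MeasurableSet.iUnion fun n => (hEcl n).measurableSet
end

section
/- Let M be a nonempty compact metric space, let ℙ be a Borel probability measure on ℝ^D with compact support, and set C := sup_{x ∈ supp(ℙ)} ‖x‖. Let h_k : M → ℝ^D (k ∈ ℕ) and h_∞ : M → ℝ^D be continuous maps with max_{m∈M} ‖h_k(m) − h_∞(m)‖ → 0 as k → ∞, and suppose that for every x ∈ supp(ℙ) the set argmin_{m∈M} ‖x − h_∞(m)‖ is a singleton {m_∞(x)}, with x ↦ m_∞(x) Borel measurable on supp(ℙ). Let m_k : ℝ^D → M be Borel measurable with m_k(x) ∈ argmin_{m∈M} ‖x − h_k(m)‖ for every x ∈ ℝ^D. Then for every continuous g : M → ℝ^D with max_{m∈M} ‖g(m)‖ ≤ 2C, the integrals converge: ∫ ‖x − g(m_k(x))‖² dℙ(x) → ∫ ‖x − g(m_∞(x))‖² dℙ(x) as k → ∞. -/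
open MeasureTheory Filter Topology

/-- The (topological) support of a Borel measure: the set of points all of whose
neighborhoods have positive measure. -/
def measureSupport {E : Type*} [TopologicalSpace E] [MeasurableSpace E]
    (μ : Measure E) : Set E :=
  {x | ∀ U ∈ nhds x, 0 < μ U}

/-- **Convergence of the fitting-error integrals along converging projection indices.**
With `ℙ` a compactly supported Borel probability measure on `ℝ^D`,
`C = sup_{x ∈ supp ℙ} ‖x‖`, continuous maps `h_k → h_∞` uniformly, unique (measurably
selected) nearest points `m_∞(x)` for `h_∞` on `supp ℙ`, and measurable selections
`m_k(x)` of nearest points for `h_k`, one has, for every continuous `g` with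
`max_m ‖g m‖ ≤ 2C`, `∫ ‖x - g(m_k(x))‖² dℙ → ∫ ‖x - g(m_∞(x))‖² dℙ`. -/
theorem stmt_4 {D : ℕ} {M : Type*} [MetricSpace M] [CompactSpace M] [Nonempty M]
    [MeasurableSpace M] [BorelSpace M]
    (μ : Measure (EuclideanSpace ℝ (Fin D))) [IsProbabilityMeasure μ]
    (hsupp : IsCompact (measureSupport μ))
    (C : ℝ) (hC : C = ⨆ x : measureSupport μ, ‖(x : EuclideanSpace ℝ (Fin D))‖)
    (h : ℕ → M → EuclideanSpace ℝ (Fin D)) (hinf : M → EuclideanSpace ℝ (Fin D))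
    (hc : ∀ k, Continuous (h k)) (hic : Continuous hinf)
    (hconv : Tendsto (fun k => ⨆ m : M, ‖h k m - hinf m‖) atTop (𝓝 0))
    (minf : EuclideanSpace ℝ (Fin D) → M)
    (hminf : ∀ x ∈ measureSupport μ,
      {m : M | ∀ m' : M, ‖x - hinf m‖ ≤ ‖x - hinf m'‖} = {minf x})
    (hminf_meas : Measurable fun x : measureSupport μ => minf ↑x)
    (mk : ℕ → EuclideanSpace ℝ (Fin D) → M)
    (hmk_meas : ∀ k, Measurable (mk k))
    (hmk : ∀ k x, ∀ m' : M, ‖x - h k (mk k x)‖ ≤ ‖x - h k m'‖)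
    (g : M → EuclideanSpace ℝ (Fin D)) (hg : Continuous g)
    (hgb : ∀ m : M, ‖g m‖ ≤ 2 * C) :
    Tendsto (fun k => ∫ x, ‖x - g (mk k x)‖ ^ 2 ∂μ) atTop
      (𝓝 (∫ x, ‖x - g (minf x)‖ ^ 2 ∂μ)) := by
  -- the complement of the support is null
  have hnull : μ (measureSupport μ)ᶜ = 0 := by
    obtain ⟨T, hTc, hTS, hTU⟩ :=
      TopologicalSpace.isOpen_sUnion_countable {U | IsOpen U ∧ μ U = 0}
        (fun U hU => hU.1)
    have hsub : (measureSupport μ)ᶜ ⊆ ⋃₀ {U | IsOpen U ∧ μ U = 0} := by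
      intro x hx
      simp only [measureSupport, Set.mem_compl_iff, Set.mem_setOf_eq, not_forall] at hx
      obtain ⟨U, hU, hU0⟩ := hx
      have hU0 : μ U = 0 := le_antisymm (not_lt.1 hU0) zero_le
      obtain ⟨V, hVU, hVo, hxV⟩ := mem_nhds_iff.1 hU
      exact ⟨V, ⟨hVo, measure_mono_null hVU hU0⟩, hxV⟩
    refine measure_mono_null hsub ?_
    rw [← hTU]
    exact (measure_sUnion_null_iff hTc).2 fun s hs => (hTS hs).2
  have hae : ∀ᵐ x ∂μ, x ∈ measureSupport μ := by
    rw [ae_iff]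
    exact hnull
  -- the support is nonempty
  have hne : (measureSupport μ).Nonempty := by
    by_contra hemp
    rw [Set.not_nonempty_iff_eq_empty] at hemp
    have : μ Set.univ = 0 := by
      simpa [hemp] using hnull
    simp at this
  -- norm bound on the support
  have hbdd : BddAbove (Set.range fun x : measureSupport μ => ‖(x : EuclideanSpace ℝ (Fin D))‖) := by
    have : (Set.range fun x : measureSupport μ => ‖(x : EuclideanSpace ℝ (Fin D))‖)
        = Norm.norm '' measureSupport μ := by
      rw [← Set.image_univ, ← Set.image_image, Set.image_univ, Subtype.range_coe]
    rw [this]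
    exact (hsupp.image continuous_norm).bddAbove
  have hnorm : ∀ x ∈ measureSupport μ, ‖x‖ ≤ C := fun x hx => by
    rw [hC]; exact le_ciSup hbdd ⟨x, hx⟩
  have hCnn : 0 ≤ C := hne.elim fun x hx => (norm_nonneg x).trans (hnorm x hx)
  -- uniform bound by the sup
  have hble : ∀ k m, ‖h k m - hinf m‖ ≤ ⨆ m : M, ‖h k m - hinf m‖ := fun k m =>
    le_ciSup (isCompact_range (((hc k).sub hic).norm)).bddAbove m
  -- pointwise convergence of h k
  have hpt : ∀ m, Tendsto (fun k => h k m) atTop (𝓝 (hinf m)) := fun m => by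
    rw [tendsto_iff_norm_sub_tendsto_zero]
    exact squeeze_zero (fun k => norm_nonneg _) (fun k => hble k m) hconv
  -- convergence of projection indices
  have hproj : ∀ x ∈ measureSupport μ, Tendsto (fun k => mk k x) atTop (𝓝 (minf x)) := by
    intro x hx
    apply tendsto_of_subseq_tendsto
    intro ns hns
    obtain ⟨a, -, φ, hφ, ha⟩ := IsCompact.tendsto_subseq (isCompact_univ (X := M))
      (fun n => Set.mem_univ (mk (ns n) x))
    set K : ℕ → ℕ := fun j => ns (φ j) with hK
    have hKt : Tendsto K atTop atTop := hns.comp hφ.tendsto_atTop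
    have ha' : Tendsto (fun j => mk (K j) x) atTop (𝓝 a) := ha
    -- h (K j) (mk (K j) x) → hinf a
    have h1 : Tendsto (fun j => h (K j) (mk (K j) x)) atTop (𝓝 (hinf a)) := by
      rw [tendsto_iff_norm_sub_tendsto_zero]
      have hb : ∀ j, ‖h (K j) (mk (K j) x) - hinf a‖ ≤
          (⨆ m : M, ‖h (K j) m - hinf m‖) + ‖hinf (mk (K j) x) - hinf a‖ := by
        intro j
        calc ‖h (K j) (mk (K j) x) - hinf a‖
            ≤ ‖h (K j) (mk (K j) x) - hinf (mk (K j) x)‖ + ‖hinf (mk (K j) x) - hinf a‖ :=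
              norm_sub_le_norm_sub_add_norm_sub _ _ _
          _ ≤ _ := add_le_add (hble _ _) le_rfl
      have hlim : Tendsto (fun j => (⨆ m : M, ‖h (K j) m - hinf m‖)
          + ‖hinf (mk (K j) x) - hinf a‖) atTop (𝓝 0) := by
        have t1 : Tendsto (fun j => ⨆ m : M, ‖h (K j) m - hinf m‖) atTop (𝓝 0) :=
          hconv.comp hKt
        have t2 : Tendsto (fun j => ‖hinf (mk (K j) x) - hinf a‖) atTop (𝓝 0) := by
          rw [← tendsto_iff_norm_sub_tendsto_zero]
          exact (hic.continuousAt.tendsto).comp ha'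
        simpa using t1.add t2
      exact squeeze_zero (fun j => norm_nonneg _) hb hlim
    have hmem : a ∈ {m : M | ∀ m' : M, ‖x - hinf m‖ ≤ ‖x - hinf m'‖} := by
      intro m'
      have hL : Tendsto (fun j => ‖x - h (K j) (mk (K j) x)‖) atTop (𝓝 ‖x - hinf a‖) :=
        (tendsto_const_nhds.sub h1).norm
      have hR : Tendsto (fun j => ‖x - h (K j) m'‖) atTop (𝓝 ‖x - hinf m'‖) :=
        (tendsto_const_nhds.sub ((hpt m').comp hKt)).norm
      exact le_of_tendsto_of_tendsto' hL hR fun j => hmk (K j) x m'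
    rw [hminf x hx] at hmem
    exact ⟨φ, hmem ▸ ha'⟩
  -- dominated convergence
  refine tendsto_integral_of_dominated_convergence (fun _ => (3 * C) ^ 2)
    (fun k => ?_) (integrable_const _) (fun k => ?_) ?_
  · exact ((measurable_id.sub (hg.measurable.comp (hmk_meas k))).norm.pow_const 2).aestronglyMeasurable
  · filter_upwards [hae] with x hx
    have h1 : ‖x - g (mk k x)‖ ≤ 3 * C := by
      calc ‖x - g (mk k x)‖ ≤ ‖x‖ + ‖g (mk k x)‖ := norm_sub_le _ _
        _ ≤ C + 2 * C := add_le_add (hnorm x hx) (hgb _)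
        _ = 3 * C := by ring
    rw [Real.norm_eq_abs, abs_of_nonneg (by positivity)]
    exact pow_le_pow_left₀ (norm_nonneg _) h1 2
  · filter_upwards [hae] with x hx
    exact ((tendsto_const_nhds.sub (hg.continuousAt.tendsto.comp (hproj x hx))).norm).pow 2
end

section
/- Let g : ℝ → ℝ^D be twice continuously differentiable and 2π-periodic, i.e., g(t + 2π) = g(t) for all t ∈ ℝ. Then ∫_0^{2π} ‖g'(t)‖ dt ≤ (2π)^{3/2} · ( ∫_0^{2π} ‖g''(t)‖² dt )^{1/2}. -/
open Real MeasureTheory intervalIntegral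

/-- **The curve length is dominated by the L² norm of the second derivative.**
Let `g : ℝ → ℝ^D` be twice continuously differentiable and `2π`-periodic. Then
`∫_0^{2π} ‖g'(t)‖ dt ≤ (2π)^{3/2} (∫_0^{2π} ‖g''(t)‖² dt)^{1/2}`. -/
theorem stmt_7 {D : ℕ} (g : ℝ → EuclideanSpace ℝ (Fin D))
    (hg : ContDiff ℝ 2 g)
    (hper : ∀ t : ℝ, g (t + 2 * π) = g t) :
    ∫ t in (0:ℝ)..(2 * π), ‖deriv g t‖ ≤
      (2 * π) ^ ((3 : ℝ) / 2) *
        (∫ t in (0:ℝ)..(2 * π), ‖deriv (deriv g) t‖ ^ 2) ^ ((1 : ℝ) / 2) := by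
  have hπ : (0:ℝ) < 2 * π := by positivity
  have hg2 : ContDiff ℝ (1 + 1) g := by norm_num; exact hg
  have hdiff1 : Differentiable ℝ g := (contDiff_succ_iff_deriv.mp hg2).1
  have hg' : ContDiff ℝ 1 (deriv g) := (contDiff_succ_iff_deriv.mp hg2).2.2
  have hdiff2 : Differentiable ℝ (deriv g) := (contDiff_one_iff_deriv.mp hg').1
  have hcont2 : Continuous (deriv (deriv g)) := (contDiff_one_iff_deriv.mp hg').2
  have hcont1 : Continuous (deriv g) := hg'.continuous
  -- mean of g' over the period is zero
  have hmean : ∫ u in (0:ℝ)..(2*π), deriv g u = 0 := by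
    rw [integral_deriv_eq_sub (fun u _ => hdiff1 u) (hcont1.intervalIntegrable _ _)]
    have := hper 0
    simp only [zero_add] at this
    rw [this, sub_self]
  set C : ℝ := ∫ u in (0:ℝ)..(2*π), ‖deriv (deriv g) u‖ with hC
  have hCnn : 0 ≤ C :=
    intervalIntegral.integral_nonneg hπ.le fun _ _ => norm_nonneg _
  -- ‖g' v - g' u‖ ≤ C for u,v ∈ [0,2π]
  have hstep : ∀ u ∈ Set.Icc (0:ℝ) (2*π), ∀ v ∈ Set.Icc (0:ℝ) (2*π),
      ‖deriv g v - deriv g u‖ ≤ C := by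
    have base : ∀ u v : ℝ, 0 ≤ u → u ≤ v → v ≤ 2*π → ‖deriv g v - deriv g u‖ ≤ C := by
      intro u v hu huv hv
      have hftc : ∫ s in u..v, deriv (deriv g) s = deriv g v - deriv g u :=
        integral_deriv_eq_sub (fun s _ => hdiff2 s) (hcont2.intervalIntegrable _ _)
      rw [← hftc]
      calc ‖∫ s in u..v, deriv (deriv g) s‖ ≤ ∫ s in u..v, ‖deriv (deriv g) s‖ :=
            intervalIntegral.norm_integral_le_integral_norm huv
        _ ≤ C := by
            refine intervalIntegral.integral_mono_interval hu huv hv ?_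
              ((hcont2.norm).intervalIntegrable _ _)
            exact Filter.Eventually.of_forall fun _ => norm_nonneg _
    intro u hu v hv
    rcases le_total u v with h | h
    · exact base u v hu.1 h hv.2
    · rw [norm_sub_rev]; exact base v u hv.1 h hu.2
  -- pointwise bound ‖g' t‖ ≤ C on [0,2π]
  have key : ∀ t ∈ Set.Icc (0:ℝ) (2*π), ‖deriv g t‖ ≤ C := by
    intro t ht
    have h1 : (2*π) • deriv g t = ∫ s in (0:ℝ)..(2*π), (deriv g t - deriv g s) := by
      rw [intervalIntegral.integral_sub (intervalIntegrable_const)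
        (hcont1.intervalIntegrable _ _), hmean, sub_zero,
        intervalIntegral.integral_const, sub_zero]
    have h2 : ‖(2*π) • deriv g t‖ ≤ C * |2*π - 0| := by
      rw [h1]
      refine intervalIntegral.norm_integral_le_of_norm_le_const fun s hs => ?_
      have hs' : s ∈ Set.Icc (0:ℝ) (2*π) := by
        rw [Set.uIoc_of_le hπ.le] at hs
        exact ⟨hs.1.le, hs.2⟩
      rw [norm_sub_rev]
      exact hstep t ht s hs'
    rw [norm_smul, Real.norm_of_nonneg hπ.le] at h2
    rw [abs_of_nonneg (by linarith), sub_zero] at h2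
    nlinarith [norm_nonneg (deriv g t)]
  -- step 1: ∫‖g'‖ ≤ 2π C
  have step1 : ∫ t in (0:ℝ)..(2*π), ‖deriv g t‖ ≤ (2*π) * C := by
    calc ∫ t in (0:ℝ)..(2*π), ‖deriv g t‖ ≤ ∫ _t in (0:ℝ)..(2*π), C :=
          intervalIntegral.integral_mono_on hπ.le
            ((hcont1.norm).intervalIntegrable _ _) intervalIntegrable_const key
      _ = (2*π) * C := by rw [intervalIntegral.integral_const, smul_eq_mul, sub_zero]
  -- step 2: Hölder, C ≤ (2π)^(1/2) * (∫ ‖g''‖²)^(1/2)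
  set I : ℝ := ∫ t in (0:ℝ)..(2*π), ‖deriv (deriv g) t‖ ^ 2 with hI
  have hInn : 0 ≤ I :=
    intervalIntegral.integral_nonneg hπ.le fun _ _ => sq_nonneg _
  have hμfin : IsFiniteMeasure (volume.restrict (Set.Ioc (0:ℝ) (2*π))) := by
    constructor
    rw [Measure.restrict_apply_univ]
    exact measure_Ioc_lt_top
  have holder : C ≤ I ^ ((1:ℝ)/2) * (2*π) ^ ((1:ℝ)/2) := by
    have hconj : Real.HolderConjugate 2 2 := by constructor <;> norm_num
    have hbound : ∃ M : ℝ, ∀ x ∈ Set.Icc (0:ℝ) (2*π), ‖deriv (deriv g) x‖ ≤ M := by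
      rcases (isCompact_Icc : IsCompact (Set.Icc (0:ℝ) (2*π))).exists_bound_of_continuousOn
        (hcont2.continuousOn) with ⟨M, hM⟩
      exact ⟨M, hM⟩
    rcases hbound with ⟨M, hM⟩
    have hf : MemLp (deriv (deriv g)) (ENNReal.ofReal 2)
        (volume.restrict (Set.Ioc (0:ℝ) (2*π))) := by
      refine MemLp.of_bound (hcont2.aestronglyMeasurable.restrict) M ?_
      refine (ae_restrict_iff' measurableSet_Ioc).mpr ?_
      exact Filter.Eventually.of_forall fun x hx => hM x ⟨hx.1.le, hx.2⟩
    have h1 : MemLp (fun _ : ℝ => (1:ℝ)) (ENNReal.ofReal 2)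
        (volume.restrict (Set.Ioc (0:ℝ) (2*π))) := memLp_const 1
    have this := MeasureTheory.integral_mul_le_Lp_mul_Lq_of_nonneg
      (μ := volume.restrict (Set.Ioc (0:ℝ) (2*π)))
      (f := fun x => ‖deriv (deriv g) x‖) (g := fun _ : ℝ => (1:ℝ)) hconj
      (Filter.Eventually.of_forall fun _ => norm_nonneg _)
      (Filter.Eventually.of_forall fun _ => zero_le_one) hf.norm h1
    have hCeq : C = ∫ a in Set.Ioc (0:ℝ) (2*π), ‖deriv (deriv g) a‖ * (1:ℝ) := by
      rw [hC, intervalIntegral.integral_of_le hπ.le]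
      simp
    have hIeq : ∫ a in Set.Ioc (0:ℝ) (2*π), ‖deriv (deriv g) a‖ ^ (2:ℝ) = I := by
      rw [hI, intervalIntegral.integral_of_le hπ.le]
      refine setIntegral_congr_fun measurableSet_Ioc fun x _ => ?_
      rw [← Real.rpow_natCast ‖deriv (deriv g) x‖ 2]
      norm_num
    have hOne : ∫ a in Set.Ioc (0:ℝ) (2*π), (1:ℝ) ^ (2:ℝ) = 2*π := by
      rw [Real.one_rpow, setIntegral_const, smul_eq_mul, mul_one, Real.volume_real_Ioc_of_le hπ.le,
        sub_zero]
    rw [hCeq]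
    calc ∫ a in Set.Ioc (0:ℝ) (2*π), ‖deriv (deriv g) a‖ * (1:ℝ)
        ≤ (∫ a in Set.Ioc (0:ℝ) (2*π), ‖deriv (deriv g) a‖ ^ (2:ℝ)) ^ ((1:ℝ)/2) *
          (∫ a in Set.Ioc (0:ℝ) (2*π), (1:ℝ) ^ (2:ℝ)) ^ ((1:ℝ)/2) := this
      _ = I ^ ((1:ℝ)/2) * (2*π) ^ ((1:ℝ)/2) := by rw [hIeq, hOne]
  -- combine
  calc ∫ t in (0:ℝ)..(2*π), ‖deriv g t‖ ≤ (2*π) * C := step1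
    _ ≤ (2*π) * (I ^ ((1:ℝ)/2) * (2*π) ^ ((1:ℝ)/2)) := by
        exact mul_le_mul_of_nonneg_left holder hπ.le
    _ = (2 * π) ^ ((3:ℝ)/2) * I ^ ((1:ℝ)/2) := by
        rw [show (3:ℝ)/2 = 1 + 1/2 by norm_num, Real.rpow_add hπ, Real.rpow_one]
        ring
end

section
/- Let M be a nonempty compact metric space, let μ be a Borel probability measure on ℝ^D with compact support, and set C := sup_{x ∈ supp(μ)} ‖x‖. Let ℱ be a set of continuous maps f : M → ℝ^D, each satisfying max_{m∈M} ‖f(m)‖ ≤ 2C, such that ℱ is totally bounded with respect to the supremum metric on continuous maps M → ℝ^D. Let (X_i)_{i≥1} be independent, identically distributed ℝ^D-valued random variables with law μ on a probability space (Ω, 𝒜, P). Then T_N := sup_{f ∈ ℱ} | (1/N) ∑_{i=1}^N ϱ(X_i, f) − ∫ ϱ(x, f) dμ(x) | defines a random variable for each N, and T_N → 0 in probability as N → ∞. -/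
open MeasureTheory Filter Topology ProbabilityTheory

/-- Squared distance from a point to the image of a continuous map. -/
noncomputable def fitG {M : Type*} [TopologicalSpace M] {E : Type*} [MetricSpace E]
    (f : C(M, E)) (x : E) : ℝ :=
  Metric.infDist x (Set.range f) ^ 2

lemma fitG_nonneg {M : Type*} [TopologicalSpace M] {E : Type*} [MetricSpace E]
    (f : C(M, E)) (x : E) : 0 ≤ fitG f x :=
  pow_nonneg Metric.infDist_nonneg 2

lemma fitG_continuous {M : Type*} [TopologicalSpace M] {E : Type*} [MetricSpace E]
    (f : C(M, E)) : Continuous (fitG f) :=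
  (Metric.continuous_infDist_pt _).pow 2

lemma fitG_eq_iInf {M : Type*} [TopologicalSpace M] [CompactSpace M] [Nonempty M]
    {E : Type*} [NormedAddCommGroup E] (f : C(M, E)) (x : E) :
    (⨅ m : M, ‖x - f m‖ ^ 2) = fitG f x := by
  obtain ⟨m₀, -, hm₀⟩ := isCompact_univ.exists_isMinOn Set.univ_nonempty
    (Continuous.continuousOn (by fun_prop : Continuous fun m : M => dist x (f m)))
  have hm₀ : ∀ m : M, dist x (f m₀) ≤ dist x (f m) := fun m => hm₀ (Set.mem_univ m)
  have h1 : Metric.infDist x (Set.range f) = dist x (f m₀) := by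
    refine le_antisymm (Metric.infDist_le_dist_of_mem (Set.mem_range_self m₀)) ?_
    by_contra h
    push_neg at h
    obtain ⟨y, ⟨m, rfl⟩, hy⟩ := (Metric.infDist_lt_iff (Set.range_nonempty f)).1 h
    exact absurd (hm₀ m) (not_le.2 hy)
  rw [fitG, h1, dist_eq_norm]
  refine le_antisymm (ciInf_le ⟨0, ?_⟩ m₀) (le_ciInf fun m => ?_)
  · rintro y ⟨m, rfl⟩; positivity
  · have := hm₀ m
    rw [dist_eq_norm, dist_eq_norm] at this
    exact pow_le_pow_left₀ (norm_nonneg _) this 2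

lemma infDist_range_le_add_dist {M : Type*} [TopologicalSpace M] [CompactSpace M] [Nonempty M]
    {E : Type*} [MetricSpace E] (f g : C(M, E)) (x : E) :
    Metric.infDist x (Set.range f) ≤ Metric.infDist x (Set.range g) + dist f g := by
  by_contra h
  push_neg at h
  have h' : Metric.infDist x (Set.range g) < Metric.infDist x (Set.range f) - dist f g := by
    linarith
  obtain ⟨y, ⟨m, rfl⟩, hy⟩ := (Metric.infDist_lt_iff (Set.range_nonempty g)).1 h'
  have h2 : Metric.infDist x (Set.range f) ≤ dist x (f m) :=
    Metric.infDist_le_dist_of_mem (Set.mem_range_self m)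
  have h3 : dist x (f m) ≤ dist x (g m) + dist (g m) (f m) := dist_triangle _ _ _
  have h4 : dist (g m) (f m) ≤ dist g f := ContinuousMap.dist_apply_le_dist m
  rw [dist_comm g f] at h4
  linarith

lemma infDist_range_le {M : Type*} [TopologicalSpace M] [CompactSpace M] [Nonempty M]
    {E : Type*} [NormedAddCommGroup E] (f : C(M, E)) (x : E) {b : ℝ}
    (hb : ∀ m, ‖f m‖ ≤ b) : Metric.infDist x (Set.range f) ≤ ‖x‖ + b := by
  have m := Classical.arbitrary M
  refine (Metric.infDist_le_dist_of_mem (Set.mem_range_self m)).trans ?_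
  rw [dist_eq_norm]
  have := hb m
  have := norm_sub_le x (f m)
  linarith

lemma fitG_le_of_norm_le {M : Type*} [TopologicalSpace M] [CompactSpace M] [Nonempty M]
    {E : Type*} [NormedAddCommGroup E] (f : C(M, E)) (x : E) {b : ℝ}
    (hb : ∀ m, ‖f m‖ ≤ b) : fitG f x ≤ (‖x‖ + b) ^ 2 := by
  have h0 : (0:ℝ) ≤ ‖x‖ + b := by
    have := hb (Classical.arbitrary M)
    have := norm_nonneg (f (Classical.arbitrary M))
    have := norm_nonneg x
    linarith
  exact pow_le_pow_left₀ Metric.infDist_nonneg (infDist_range_le f x hb) 2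

lemma fitG_le_add {M : Type*} [TopologicalSpace M] [CompactSpace M] [Nonempty M]
    {E : Type*} [NormedAddCommGroup E] (f g : C(M, E)) (x : E) {b : ℝ}
    (hg : ∀ m, ‖g m‖ ≤ b) :
    fitG f x ≤ fitG g x + dist f g * (2 * (‖x‖ + b) + dist f g) := by
  have h0 : 0 ≤ Metric.infDist x (Set.range f) := Metric.infDist_nonneg
  have h1 : 0 ≤ Metric.infDist x (Set.range g) := Metric.infDist_nonneg
  have h2 := infDist_range_le_add_dist f g x
  have h3 := infDist_range_le g x hg
  have hd : 0 ≤ dist f g := dist_nonneg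
  have hsq : Metric.infDist x (Set.range f) ^ 2 ≤
      (Metric.infDist x (Set.range g) + dist f g) ^ 2 :=
    pow_le_pow_left₀ h0 h2 2
  rw [fitG, fitG]
  nlinarith [mul_le_mul_of_nonneg_right h3 hd]

lemma abs_fitG_sub_le {M : Type*} [TopologicalSpace M] [CompactSpace M] [Nonempty M]
    {E : Type*} [NormedAddCommGroup E] (f g : C(M, E)) (x : E) {b : ℝ}
    (hf : ∀ m, ‖f m‖ ≤ b) (hg : ∀ m, ‖g m‖ ≤ b) :
    |fitG f x - fitG g x| ≤ dist f g * (2 * (‖x‖ + b) + dist f g) := by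
  rw [abs_sub_le_iff]
  constructor
  · have := fitG_le_add f g x hg; linarith
  · have := fitG_le_add g f x hf
    rw [dist_comm g f] at this
    linarith
/-- **Uniform law of large numbers for the fitting error over a totally bounded class.**
With `μ` a compactly supported Borel probability measure on `ℝ^D`,
`C = sup_{x ∈ supp μ} ‖x‖`, `F` a totally bounded (w.r.t. the supremum metric) family of
continuous maps `M → ℝ^D` all bounded by `2C`, and `(X_i)` i.i.d. with law `μ`, the
quantity `T_N = sup_{f ∈ F} |N⁻¹ ∑_{i<N} ϱ(X_i, f) - ∫ ϱ(x, f) dμ|`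
(with `ϱ(x,f) = min_m ‖x - f m‖²`) is measurable for each `N`
and tends to `0` in probability. -/
theorem stmt_9 {D : ℕ} {M : Type*} [MetricSpace M] [CompactSpace M] [Nonempty M]
    {Ω : Type*} [MeasurableSpace Ω] (P : Measure Ω) [IsProbabilityMeasure P]
    (μ : Measure (EuclideanSpace ℝ (Fin D))) [IsProbabilityMeasure μ]
    (hsupp : IsCompact (measureSupport μ))
    (C : ℝ) (hC : C = ⨆ x : measureSupport μ, ‖(x : EuclideanSpace ℝ (Fin D))‖)
    (F : Set C(M, EuclideanSpace ℝ (Fin D)))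
    (hFtb : TotallyBounded F)
    (hFb : ∀ f ∈ F, ∀ m : M, ‖f m‖ ≤ 2 * C)
    (X : ℕ → Ω → EuclideanSpace ℝ (Fin D))
    (hXmeas : ∀ i, Measurable (X i))
    (hXdist : ∀ i, Measure.map (X i) P = μ)
    (hXindep : iIndepFun X P)
    (T : ℕ → Ω → ℝ)
    (hT : ∀ N ω, T N ω =
      ⨆ f : F, |(N : ℝ)⁻¹ * ∑ i ∈ Finset.range N,
            (⨅ m : M, ‖X i ω - (f : C(M, EuclideanSpace ℝ (Fin D))) m‖ ^ 2) -
          ∫ x, (⨅ m : M, ‖x - (f : C(M, EuclideanSpace ℝ (Fin D))) m‖ ^ 2) ∂μ|) :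
    (∀ N, Measurable (T N)) ∧
      TendstoInMeasure P T atTop (fun _ => (0 : ℝ)) := by
  classical
  set S := measureSupport μ with hS
  -- the support has full measure
  have hnull : μ Sᶜ = 0 := by
    have hx : ∀ x : ↥Sᶜ, ∃ U, IsOpen U ∧ (x : EuclideanSpace ℝ (Fin D)) ∈ U ∧ μ U = 0 := by
      rintro ⟨x, hx⟩
      simp only [hS, measureSupport, Set.mem_compl_iff, Set.mem_setOf_eq, not_forall] at hx
      obtain ⟨U, hU, hμU⟩ := hx
      refine ⟨interior U, isOpen_interior, mem_interior_iff_mem_nhds.2 hU,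
        measure_mono_null interior_subset ?_⟩
      exact nonpos_iff_eq_zero.mp (not_lt.mp hμU)
    choose U hUo hUm hUn using hx
    obtain ⟨t, htc, htU⟩ := TopologicalSpace.isOpen_iUnion_countable U hUo
    have hsub : Sᶜ ⊆ ⋃ i ∈ t, U i := by
      rw [htU]
      intro x hx
      exact Set.mem_iUnion.2 ⟨⟨x, hx⟩, hUm _⟩
    exact measure_mono_null hsub ((measure_biUnion_null_iff htc).2 fun i _ => hUn i)
  have hSmeas : MeasurableSet S := hsupp.isClosed.measurableSet
  have haeμ : ∀ᵐ x ∂μ, x ∈ S := by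
    rw [ae_iff]
    simpa [Set.compl_def] using hnull
  have hSne : S.Nonempty := by
    rcases Set.eq_empty_or_nonempty S with h | h
    · exfalso
      have h1 : μ Set.univ = 0 := by
        rw [← Set.compl_empty, ← h]; exact hnull
      simp [measure_univ] at h1
    · exact h
  have hnormC : ∀ x ∈ S, ‖x‖ ≤ C := by
    obtain ⟨R, hR⟩ := isBounded_iff_forall_norm_le.1 hsupp.isBounded
    intro x hx
    have hbdd : BddAbove (Set.range fun y : S => ‖(y : EuclideanSpace ℝ (Fin D))‖) :=
      ⟨R, by rintro _ ⟨y, rfl⟩; exact hR y y.2⟩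
    rw [hC]
    exact le_ciSup hbdd ⟨x, hx⟩
  have hC0 : 0 ≤ C := by
    obtain ⟨x, hx⟩ := hSne
    exact (norm_nonneg x).trans (hnormC x hx)
  -- rewrite T via fitG
  have hT' : ∀ N ω, T N ω = ⨆ f : F,
      |(N : ℝ)⁻¹ * ∑ i ∈ Finset.range N, fitG (f : C(M, EuclideanSpace ℝ (Fin D))) (X i ω) -
        ∫ x, fitG (f : C(M, EuclideanSpace ℝ (Fin D))) x ∂μ| := by
    intro N ω
    simp_rw [hT, fitG_eq_iInf]
  have hfitG_meas : ∀ f : C(M, EuclideanSpace ℝ (Fin D)), Measurable (fitG f) :=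
    fun f => (fitG_continuous f).measurable
  have hboundS : ∀ f ∈ F, ∀ x ∈ S, fitG f x ≤ (3 * C) ^ 2 := by
    intro f hf x hx
    refine (fitG_le_of_norm_le f x (hFb f hf)).trans ?_
    have h1 := hnormC x hx
    have h2 := norm_nonneg x
    exact pow_le_pow_left₀ (by linarith) (by linarith) 2
  have hμint : ∀ f ∈ F, Integrable (fitG f) μ := by
    intro f hf
    refine Integrable.mono' (integrable_const ((3 * C) ^ 2))
      (hfitG_meas f).aestronglyMeasurable ?_
    filter_upwards [haeμ] with x hx
    rw [Real.norm_eq_abs, abs_of_nonneg (fitG_nonneg f x)]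
    exact hboundS f hf x hx
  have hintbound : ∀ f ∈ F, |∫ x, fitG f x ∂μ| ≤ (3 * C) ^ 2 := by
    intro f hf
    rw [← Real.norm_eq_abs]
    calc ‖∫ x, fitG f x ∂μ‖ ≤ (3 * C) ^ 2 * (μ Set.univ).toReal := by
          refine norm_integral_le_of_norm_le_const ?_
          filter_upwards [haeμ] with x hx
          rw [Real.norm_eq_abs, abs_of_nonneg (fitG_nonneg f x)]
          exact hboundS f hf x hx
      _ = (3 * C) ^ 2 := by simp
  -- averaging bound
  have hsum_le : ∀ (N : ℕ) (h : ℕ → ℝ) (K : ℝ), 0 ≤ K →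
      (∀ i ∈ Finset.range N, |h i| ≤ K) →
      |(N : ℝ)⁻¹ * ∑ i ∈ Finset.range N, h i| ≤ K := by
    intro N h K hK hb
    rw [abs_mul, abs_of_nonneg (by positivity : (0:ℝ) ≤ (N : ℝ)⁻¹)]
    have h1 : |∑ i ∈ Finset.range N, h i| ≤ N * K := by
      refine (Finset.abs_sum_le_sum_abs _ _).trans ?_
      calc ∑ i ∈ Finset.range N, |h i| ≤ ∑ _i ∈ Finset.range N, K := Finset.sum_le_sum hb
        _ = N * K := by simp [mul_comm]
    calc (N : ℝ)⁻¹ * |∑ i ∈ Finset.range N, h i| ≤ (N : ℝ)⁻¹ * (N * K) := by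
          exact mul_le_mul_of_nonneg_left h1 (by positivity)
      _ ≤ K := by
          rcases Nat.eq_zero_or_pos N with rfl | hN
          · simpa using hK
          · rw [← mul_assoc, inv_mul_cancel₀ (by exact_mod_cast hN.ne' : (N:ℝ) ≠ 0), one_mul]
  -- comparison of fluctuations for two functions
  have hAdiff : ∀ (N : ℕ) (ω : Ω) (K : ℝ), 0 ≤ K →
      (∀ i ∈ Finset.range N, ‖X i ω‖ ≤ K) →
      ∀ f ∈ F, ∀ g ∈ F,
      |(N : ℝ)⁻¹ * ∑ i ∈ Finset.range N, fitG f (X i ω) - ∫ x, fitG f x ∂μ| ≤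
        |(N : ℝ)⁻¹ * ∑ i ∈ Finset.range N, fitG g (X i ω) - ∫ x, fitG g x ∂μ|
          + dist f g * (2 * (K + 2 * C) + dist f g)
          + dist f g * (2 * (3 * C) + dist f g) := by
    intro N ω K hK hKb f hf g hg
    have hd0 : (0:ℝ) ≤ dist f g := dist_nonneg
    have hemp : |(N : ℝ)⁻¹ * ∑ i ∈ Finset.range N, fitG f (X i ω) -
        (N : ℝ)⁻¹ * ∑ i ∈ Finset.range N, fitG g (X i ω)| ≤
        dist f g * (2 * (K + 2 * C) + dist f g) := by
      rw [← mul_sub, ← Finset.sum_sub_distrib]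
      refine hsum_le N _ _ (by nlinarith) ?_
      intro i hi
      refine (abs_fitG_sub_le f g (X i ω) (hFb f hf) (hFb g hg)).trans ?_
      have h1 := hKb i hi
      have h2 := norm_nonneg (X i ω)
      nlinarith
    have hint : |∫ x, fitG f x ∂μ - ∫ x, fitG g x ∂μ| ≤
        dist f g * (2 * (3 * C) + dist f g) := by
      rw [← integral_sub (hμint f hf) (hμint g hg), ← Real.norm_eq_abs]
      calc ‖∫ x, (fitG f x - fitG g x) ∂μ‖
          ≤ (dist f g * (2 * (3 * C) + dist f g)) * (μ Set.univ).toReal := by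
            refine norm_integral_le_of_norm_le_const ?_
            filter_upwards [haeμ] with x hx
            rw [Real.norm_eq_abs]
            refine (abs_fitG_sub_le f g x (hFb f hf) (hFb g hg)).trans ?_
            have h1 := hnormC x hx
            have h2 := norm_nonneg x
            nlinarith
        _ = dist f g * (2 * (3 * C) + dist f g) := by simp
    set a1 := (N : ℝ)⁻¹ * ∑ i ∈ Finset.range N, fitG f (X i ω)
    set a2 := (N : ℝ)⁻¹ * ∑ i ∈ Finset.range N, fitG g (X i ω)
    set b1 := ∫ x, fitG f x ∂μ
    set b2 := ∫ x, fitG g x ∂μ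
    have key : |a1 - b1| ≤ |a2 - b2| + (|a1 - a2| + |b1 - b2|) := by
      have he : a1 - b1 = (a2 - b2) + ((a1 - a2) - (b1 - b2)) := by ring
      rw [he]
      refine (abs_add_le _ _).trans ?_
      have h3 : |(a1 - a2) - (b1 - b2)| ≤ |a1 - a2| + |b1 - b2| := abs_sub _ _
      linarith
    linarith
  -- a.s. the samples lie in the support
  have hPaeS : ∀ᵐ ω ∂P, ∀ i, X i ω ∈ S := by
    rw [ae_all_iff]
    intro i
    have h1 : P (X i ⁻¹' Sᶜ) = 0 := by
      rw [← Measure.map_apply (hXmeas i) hSmeas.compl, hXdist i]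
      exact hnull
    rw [ae_iff]
    exact h1
  -- strong law for each fixed function
  have hLLN : ∀ g ∈ F, ∀ᵐ ω ∂P,
      Tendsto (fun N : ℕ => (N : ℝ)⁻¹ * ∑ i ∈ Finset.range N, fitG g (X i ω)) atTop
        (𝓝 (∫ x, fitG g x ∂μ)) := by
    intro g hg
    have hYmeas : ∀ i, Measurable fun ω => fitG g (X i ω) :=
      fun i => (hfitG_meas g).comp (hXmeas i)
    have hint : Integrable (fun ω => fitG g (X 0 ω)) P := by
      refine Integrable.mono' (integrable_const ((3 * C) ^ 2))
        (hYmeas 0).aestronglyMeasurable ?_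
      filter_upwards [hPaeS] with ω hω
      rw [Real.norm_eq_abs, abs_of_nonneg (fitG_nonneg _ _)]
      exact hboundS g hg _ (hω 0)
    have hindep : Pairwise (Function.onFun (IndepFun · · P) fun i ω => fitG g (X i ω)) := by
      intro i j hij
      exact (hXindep.indepFun hij).comp (hfitG_meas g) (hfitG_meas g)
    have hident : ∀ i, IdentDistrib (fun ω => fitG g (X i ω)) (fun ω => fitG g (X 0 ω)) P P := by
      intro i
      have hXid : IdentDistrib (X i) (X 0) P P :=
        ⟨(hXmeas i).aemeasurable, (hXmeas 0).aemeasurable, by rw [hXdist i, hXdist 0]⟩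
      exact hXid.comp (hfitG_meas g)
    have hsl := strong_law_ae_real _ hint hindep hident
    have heq : ∫ ω, fitG g (X 0 ω) ∂P = ∫ x, fitG g x ∂μ := by
      rw [← hXdist 0,
        integral_map (hXmeas 0).aemeasurable (fitG_continuous g).aestronglyMeasurable]
    filter_upwards [hsl] with ω hω
    rw [heq] at hω
    simpa [div_eq_inv_mul] using hω
  rcases Set.eq_empty_or_nonempty F with hFe | hFne
  · -- trivial case: empty family
    have hTz : T = fun _ _ => (0 : ℝ) := by
      funext N ω
      rw [hT]
      haveI : IsEmpty ↥F := Set.isEmpty_coe_sort.2 hFe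
      exact Real.iSup_of_isEmpty _
    constructor
    · intro N
      rw [hTz]
      exact measurable_const
    · rw [hTz]
      exact tendstoInMeasure_of_tendsto_ae (fun _ => aestronglyMeasurable_const)
        (ae_of_all _ fun ω => tendsto_const_nhds)
  obtain ⟨f₀, hf₀⟩ := hFne
  haveI : Nonempty ↥F := ⟨⟨f₀, hf₀⟩⟩
  -- uniform bound giving BddAbove
  have hbddF : ∀ (N : ℕ) (ω : Ω), BddAbove (Set.range fun f : F =>
      |(N : ℝ)⁻¹ * ∑ i ∈ Finset.range N, fitG (f : C(M, EuclideanSpace ℝ (Fin D))) (X i ω) -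
        ∫ x, fitG (f : C(M, EuclideanSpace ℝ (Fin D))) x ∂μ|) := by
    intro N ω
    refine ⟨(∑ i ∈ Finset.range N, (‖X i ω‖ + 2 * C) ^ 2) + (3 * C) ^ 2, ?_⟩
    rintro _ ⟨⟨f, hf⟩, rfl⟩
    have h1 : |(N : ℝ)⁻¹ * ∑ i ∈ Finset.range N, fitG f (X i ω)| ≤
        ∑ i ∈ Finset.range N, (‖X i ω‖ + 2 * C) ^ 2 := by
      have hb : ∀ i ∈ Finset.range N, |fitG f (X i ω)| ≤ (‖X i ω‖ + 2 * C) ^ 2 := by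
        intro i _
        rw [abs_of_nonneg (fitG_nonneg _ _)]
        exact fitG_le_of_norm_le f _ (hFb f hf)
      rw [abs_mul, abs_of_nonneg (by positivity : (0:ℝ) ≤ (N : ℝ)⁻¹)]
      have h2 : |∑ i ∈ Finset.range N, fitG f (X i ω)| ≤
          ∑ i ∈ Finset.range N, (‖X i ω‖ + 2 * C) ^ 2 :=
        (Finset.abs_sum_le_sum_abs _ _).trans (Finset.sum_le_sum hb)
      have h3 : (0:ℝ) ≤ ∑ i ∈ Finset.range N, (‖X i ω‖ + 2 * C) ^ 2 :=
        Finset.sum_nonneg fun i _ => sq_nonneg _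
      have h4 : (N : ℝ)⁻¹ ≤ 1 ∨ N = 0 := by
        rcases Nat.eq_zero_or_pos N with rfl | hN
        · exact Or.inr rfl
        · exact Or.inl (by
            rw [inv_le_one_iff₀]
            right
            exact_mod_cast hN)
      rcases h4 with h4 | rfl
      · nlinarith [abs_nonneg (∑ i ∈ Finset.range N, fitG f (X i ω))]
      · simp
    have h5 := hintbound f hf
    have h6 := abs_sub (((N : ℝ)⁻¹ * ∑ i ∈ Finset.range N, fitG f (X i ω)))
      (∫ x, fitG f x ∂μ)
    dsimp only
    linarith
  have hTnn : ∀ N ω, 0 ≤ T N ω := by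
    intro N ω
    rw [hT']
    exact le_ciSup_of_le (hbddF N ω) ⟨f₀, hf₀⟩ (abs_nonneg _)
  -- finite nets
  have hnet : ∀ δ > (0:ℝ), ∃ t : Set C(M, EuclideanSpace ℝ (Fin D)), t ⊆ F ∧ t.Finite ∧
      ∀ f ∈ F, ∃ g ∈ t, dist f g < δ := by
    intro δ hδ
    obtain ⟨t, hts, htf, hcov⟩ := totallyBounded_iff_subset.1 hFtb
      {p | dist p.1 p.2 < δ} (Metric.dist_mem_uniformity hδ)
    refine ⟨t, hts, htf, fun f hf => ?_⟩
    obtain ⟨g, hg, hfg⟩ := Set.mem_iUnion₂.1 (hcov hf)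
    exact ⟨g, hg, hfg⟩
  -- key eventual bound
  have hkey : ∀ ε > (0:ℝ), ∀ᵐ ω ∂P, ∀ᶠ N in atTop, T N ω ≤ ε := by
    intro ε hε
    set δ := min 1 (ε / (4 * (6 * C + 1))) with hδdef
    have hδ0 : 0 < δ := lt_min one_pos (by positivity)
    have hδ1 : δ ≤ 1 := min_le_left _ _
    have hδ2 : δ ≤ ε / (4 * (6 * C + 1)) := min_le_right _ _
    obtain ⟨t, htF, htfin, hcov⟩ := hnet δ hδ0
    have hκ : ∀ d : ℝ, 0 ≤ d → d ≤ δ →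
        d * (2 * (C + 2 * C) + d) + d * (2 * (3 * C) + d) ≤ ε / 2 := by
      intro d h0 h1
      have h7 : δ * (4 * (6 * C + 1)) ≤ ε := by
        have h8 : (0:ℝ) < 4 * (6 * C + 1) := by linarith
        calc δ * (4 * (6 * C + 1)) ≤ (ε / (4 * (6 * C + 1))) * (4 * (6 * C + 1)) :=
              mul_le_mul_of_nonneg_right hδ2 (le_of_lt h8)
          _ = ε := div_mul_cancel₀ ε (ne_of_gt h8)
      nlinarith
    have haet : ∀ᵐ ω ∂P, ∀ g ∈ t,
        Tendsto (fun N : ℕ => (N : ℝ)⁻¹ * ∑ i ∈ Finset.range N, fitG g (X i ω)) atTop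
          (𝓝 (∫ x, fitG g x ∂μ)) :=
      (ae_ball_iff htfin.countable).2 fun g hg => hLLN g (htF hg)
    filter_upwards [haet, hPaeS] with ω hω hωS
    have hev : ∀ᶠ N : ℕ in atTop, ∀ g ∈ t,
        |(N : ℝ)⁻¹ * ∑ i ∈ Finset.range N, fitG g (X i ω) - ∫ x, fitG g x ∂μ| ≤ ε / 2 := by
      rw [eventually_all_finite htfin]
      intro g hg
      have h := Metric.tendsto_nhds.1 (hω g hg) (ε / 2) (by positivity)
      filter_upwards [h] with N hN
      rw [Real.dist_eq] at hN
      exact le_of_lt hN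
    filter_upwards [hev] with N hN
    rw [hT']
    refine ciSup_le ?_
    rintro ⟨f, hf⟩
    obtain ⟨g, hgt, hfg⟩ := hcov f hf
    have hKb : ∀ i ∈ Finset.range N, ‖X i ω‖ ≤ C := fun i _ => hnormC _ (hωS i)
    have h1 := hAdiff N ω C hC0 hKb f hf g (htF hgt)
    have h2 := hN g hgt
    have h3 := hκ (dist f g) dist_nonneg (le_of_lt hfg)
    linarith
  -- a.s. convergence of T
  have haetendsto : ∀ᵐ ω ∂P, Tendsto (fun N : ℕ => T N ω) atTop (𝓝 0) := by
    have hq : ∀ᵐ ω ∂P, ∀ q : ℚ, 0 < q → ∀ᶠ N in atTop, T N ω ≤ q := by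
      rw [ae_all_iff]
      intro q
      by_cases hq : 0 < q
      · filter_upwards [hkey q (by exact_mod_cast hq)] with ω h _
        exact h
      · filter_upwards with ω h
        exact absurd h hq
    filter_upwards [hq] with ω hω
    rw [Metric.tendsto_atTop]
    intro ε hε
    obtain ⟨q, hq0, hqε⟩ := exists_rat_btwn hε
    obtain ⟨N₀, hN₀⟩ := eventually_atTop.1 (hω q (by exact_mod_cast hq0))
    refine ⟨N₀, fun n hn => ?_⟩
    rw [Real.dist_eq, sub_zero, abs_of_nonneg (hTnn n ω)]
    exact lt_of_le_of_lt (hN₀ n hn) hqε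
  -- measurability via a countable dense subfamily
  have hsep : TopologicalSpace.IsSeparable F := hFtb.isSeparable
  haveI : TopologicalSpace.SeparableSpace ↥F := hsep.separableSpace
  obtain ⟨c, hcc, hcd⟩ := TopologicalSpace.exists_countable_dense ↥F
  haveI : Countable ↥c := hcc.to_subtype
  have hsup_eq : ∀ N ω, T N ω = ⨆ g : c,
      |(N : ℝ)⁻¹ * ∑ i ∈ Finset.range N,
          fitG ((g : ↥F) : C(M, EuclideanSpace ℝ (Fin D))) (X i ω) -
        ∫ x, fitG ((g : ↥F) : C(M, EuclideanSpace ℝ (Fin D))) x ∂μ| := by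
    intro N ω
    rw [hT']
    set A : ↥F → ℝ := fun f =>
      |(N : ℝ)⁻¹ * ∑ i ∈ Finset.range N,
          fitG (f : C(M, EuclideanSpace ℝ (Fin D))) (X i ω) -
        ∫ x, fitG (f : C(M, EuclideanSpace ℝ (Fin D))) x ∂μ| with hA
    have hbdd2 : BddAbove (Set.range fun g : c => A (g : ↥F)) := by
      obtain ⟨B, hB⟩ := hbddF N ω
      refine ⟨B, ?_⟩
      rintro _ ⟨g, rfl⟩
      exact hB (Set.mem_range_self ((g : ↥F)))
    haveI : Nonempty ↥c := (hcd.nonempty).to_subtype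
    refine le_antisymm ?_ (ciSup_le fun g => le_ciSup (hbddF N ω) (g : ↥F))
    refine ciSup_le fun f => ?_
    refine le_of_forall_pos_le_add fun η hη => ?_
    set K := (∑ i ∈ Finset.range N, ‖X i ω‖) + C with hK
    have hK0 : 0 ≤ K := add_nonneg (Finset.sum_nonneg fun i _ => norm_nonneg _) hC0
    have hKb : ∀ i ∈ Finset.range N, ‖X i ω‖ ≤ K := by
      intro i hi
      have h1 := Finset.single_le_sum (f := fun j => ‖X j ω‖)
        (fun j _ => norm_nonneg _) hi
      simp only [hK]
      linarith
    set L := (2 * (K + 2 * C) + 1) + (2 * (3 * C) + 1) with hL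
    have hL0 : 0 < L := by nlinarith
    set δ := min 1 (η / L) with hδ
    have hδ0 : 0 < δ := lt_min one_pos (by positivity)
    have hδ1 : δ ≤ 1 := min_le_left _ _
    have hδ2 : δ ≤ η / L := min_le_right _ _
    obtain ⟨g, hgc, hfg⟩ := Metric.mem_closure_iff.1 (hcd f) δ hδ0
    rw [Subtype.dist_eq] at hfg
    have h1 := hAdiff N ω K hK0 hKb (f : C(M, EuclideanSpace ℝ (Fin D))) f.2
      (g : C(M, EuclideanSpace ℝ (Fin D))) g.2
    have h2 : A g ≤ ⨆ g : c, A (g : ↥F) := le_ciSup hbdd2 (⟨g, hgc⟩ : ↥c)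
    set d := dist (f : C(M, EuclideanSpace ℝ (Fin D))) (g : C(M, EuclideanSpace ℝ (Fin D)))
      with hd
    have hd0 : 0 ≤ d := dist_nonneg
    have hdδ : d ≤ δ := le_of_lt hfg
    have h3 : d * (2 * (K + 2 * C) + d) + d * (2 * (3 * C) + d) ≤ η := by
      have h4 : δ * L ≤ η := by
        calc δ * L ≤ (η / L) * L := mul_le_mul_of_nonneg_right hδ2 (le_of_lt hL0)
          _ = η := div_mul_cancel₀ η (ne_of_gt hL0)
      nlinarith
    have hAf : A f ≤ A g + (d * (2 * (K + 2 * C) + d) + d * (2 * (3 * C) + d)) := by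
      simp only [hA]
      have := h1
      linarith [h1]
    linarith
  have hmeas : ∀ N, Measurable (T N) := by
    intro N
    have he : T N = fun ω => ⨆ g : c,
        |(N : ℝ)⁻¹ * ∑ i ∈ Finset.range N,
            fitG ((g : ↥F) : C(M, EuclideanSpace ℝ (Fin D))) (X i ω) -
          ∫ x, fitG ((g : ↥F) : C(M, EuclideanSpace ℝ (Fin D))) x ∂μ| :=
      funext fun ω => hsup_eq N ω
    rw [he]
    refine Measurable.iSup fun g => ?_
    refine Measurable.abs (Measurable.sub ?_ measurable_const)
    exact (Finset.measurable_sum _ fun i _ =>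
      (hfitG_meas _).comp (hXmeas i)).const_mul _
  exact ⟨hmeas, tendstoInMeasure_of_tendsto_ae
    (fun n => (hmeas n).aestronglyMeasurable) haetendsto⟩
end
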